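/- Let f : ℝⁿ → ℝ be convex and differentiable with L-Lipschitz gradient, g : ℝⁿ → ℝ ∪ {+∞} proper closed convex, and F = f + g. For any y and any L_s ≥ L, let x⁺ = argmin_x [f(y) + ⟨∇f(y), x − y⟩ + (L_s/2)‖x − y‖² + g(x)]. Then for every z, F(z) − F(x⁺) ≥ (L_s/2)‖x⁺ − y‖² + L_s⟨y − z, x⁺ − y⟩. -/

import Mathlib

open RealInnerProductSpace

variable {n : ℕ}

lemma line_hasDerivAt (f : EuclideanSpace ℝ (Fin n) → ℝ)
    (f' : EuclideanSpace ℝ (Fin n) → EuclideanSpace ℝ (Fin n))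
    (hf : ∀ x, HasGradientAt f (f' x) x) (a v : EuclideanSpace ℝ (Fin n)) (t : ℝ) :
    HasDerivAt (fun s : ℝ => f (a + s • v)) ⟪f' (a + t • v), v⟫ t := by
  have h1 : HasDerivAt (fun s : ℝ => a + s • v) v t := by
    simpa using ((hasDerivAt_id t).smul_const v).const_add a
  have h2 := (hf (a + t • v)).hasFDerivAt.comp_hasDerivAt t h1
  simp at h2
  exact h2

lemma quad_id (u v : EuclideanSpace ℝ (Fin n)) (t : ℝ) :
    ‖u + t • (v - u)‖ ^ 2 = (1 - t) * ‖u‖ ^ 2 + t * ‖v‖ ^ 2 - t * (1 - t) * ‖v - u‖ ^ 2 := by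
  simp only [← real_inner_self_eq_norm_sq, inner_add_left, inner_add_right,
    inner_sub_left, inner_sub_right, real_inner_smul_left, real_inner_smul_right]
  ring

lemma grad_convex_lb (f : EuclideanSpace ℝ (Fin n) → ℝ)
    (f' : EuclideanSpace ℝ (Fin n) → EuclideanSpace ℝ (Fin n))
    (hf : ∀ x, HasGradientAt f (f' x) x)
    (hfconv : ConvexOn ℝ Set.univ f) (a b : EuclideanSpace ℝ (Fin n)) :
    f a + ⟪f' a, b - a⟫ ≤ f b := by
  set φ : ℝ → ℝ := fun s => f (a + s • (b - a)) with hφ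
  have hd : HasDerivAt φ ⟪f' a, b - a⟫ 0 := by
    simpa using line_hasDerivAt f f' hf a (b - a) 0
  have hslope : ∀ t ∈ Set.Ioo (0:ℝ) 1, slope φ 0 t ≤ f b - f a := by
    intro t ht
    have hcx := hfconv.2 (Set.mem_univ a) (Set.mem_univ b) (by linarith [ht.2] : (0:ℝ) ≤ 1 - t)
      (le_of_lt ht.1) (by ring)
    have hφt : φ t ≤ (1 - t) * f a + t * f b := by
      have : a + t • (b - a) = (1 - t) • a + t • b := by
        simp [smul_sub, sub_smul]; abel
      simpa [hφ, this] using hcx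
    rw [slope_def_field]
    simp only [sub_zero]
    rw [div_le_iff₀ ht.1]
    have hφ0 : φ 0 = f a := by simp [hφ]
    nlinarith [ht.1, hφ0, hφt]
  have htend : Filter.Tendsto (slope φ 0) (nhdsWithin 0 (Set.Ioi 0)) (nhds ⟪f' a, b - a⟫) := by
    have := (hasDerivAt_iff_tendsto_slope.mp hd)
    exact this.mono_left (nhdsWithin_mono _ (fun x hx => ne_of_gt hx))
  have : ⟪f' a, b - a⟫ ≤ f b - f a := by
    refine le_of_tendsto htend ?_
    filter_upwards [Ioo_mem_nhdsGT_of_mem (by norm_num : (0:ℝ) ∈ Set.Ico (0:ℝ) 1)] with t ht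
    exact hslope t ht
  linarith

lemma descent_lemma (f : EuclideanSpace ℝ (Fin n) → ℝ)
    (f' : EuclideanSpace ℝ (Fin n) → EuclideanSpace ℝ (Fin n))
    (hf : ∀ x, HasGradientAt f (f' x) x)
    (L : ℝ) (hL : 0 ≤ L)
    (hlip : ∀ x y, ‖f' x - f' y‖ ≤ L * ‖x - y‖)
    (a b : EuclideanSpace ℝ (Fin n)) :
    f b ≤ f a + ⟪f' a, b - a⟫ + L / 2 * ‖b - a‖ ^ 2 := by
  set v := b - a with hv
  set φ : ℝ → ℝ := fun s => f (a + s • v) - s * ⟪f' a, v⟫ - L / 2 * s ^ 2 * ‖v‖ ^ 2 with hφ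
  have hd : ∀ t : ℝ, HasDerivAt φ (⟪f' (a + t • v), v⟫ - ⟪f' a, v⟫ - L * t * ‖v‖ ^ 2) t := by
    intro t
    have h1 := line_hasDerivAt f f' hf a v t
    have h2 : HasDerivAt (fun s : ℝ => s * ⟪f' a, v⟫) ⟪f' a, v⟫ t := by
      simpa using (hasDerivAt_id t).mul_const ⟪f' a, v⟫
    have h3 : HasDerivAt (fun s : ℝ => L / 2 * s ^ 2 * ‖v‖ ^ 2) (L * t * ‖v‖ ^ 2) t := by
      have : HasDerivAt (fun s : ℝ => s ^ 2) (2 * t) t := by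
        simpa using hasDerivAt_pow 2 t
      have := (this.const_mul (L / 2)).mul_const (‖v‖ ^ 2)
      rw [show L * t * ‖v‖ ^ 2 = L / 2 * (2 * t) * ‖v‖ ^ 2 by ring]; exact this
    exact (h1.sub h2).sub h3
  have hanti : AntitoneOn φ (Set.Icc 0 1) := by
    apply antitoneOn_of_deriv_nonpos (convex_Icc 0 1)
    · exact fun t _ => ((hd t).continuousAt).continuousWithinAt
    · intro t ht
      exact ((hd t).differentiableAt).differentiableWithinAt
    · intro t ht
      rw [interior_Icc] at ht
      rw [(hd t).deriv]
      have h4 : ⟪f' (a + t • v) - f' a, v⟫ ≤ L * t * ‖v‖ ^ 2 := by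
        calc ⟪f' (a + t • v) - f' a, v⟫ ≤ ‖f' (a + t • v) - f' a‖ * ‖v‖ :=
              real_inner_le_norm _ _
          _ ≤ (L * ‖(a + t • v) - a‖) * ‖v‖ := by
              have := hlip (a + t • v) a
              nlinarith [norm_nonneg v]
          _ = L * t * ‖v‖ ^ 2 := by
              simp [norm_smul, abs_of_pos ht.1]; ring
      rw [inner_sub_left] at h4
      linarith
  have h01 := hanti (Set.left_mem_Icc.mpr one_pos.le) (Set.right_mem_Icc.mpr one_pos.le) one_pos.le
  simp only [hφ, zero_smul, add_zero, one_smul, zero_mul, one_mul] at h01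
  have : a + v = b := by simp [hv]
  rw [this] at h01
  nlinarith [h01]

/-- Key descent lemma for the proximal gradient step: if `f` is convex with
`L`-Lipschitz gradient, `g` is proper closed convex (extended-real valued),
`Ls ≥ L`, and `x⁺` minimizes the quadratic model
`f(y) + ⟨∇f(y), x - y⟩ + (Ls/2)‖x - y‖² + g(x)`, then for every `z`,
`F(z) - F(x⁺) ≥ (Ls/2)‖x⁺ - y‖² + Ls⟨y - z, x⁺ - y⟩` where `F = f + g`. -/
theorem prox_grad_descent_lemma {n : ℕ}
    (f : EuclideanSpace ℝ (Fin n) → ℝ) (f' : EuclideanSpace ℝ (Fin n) → EuclideanSpace ℝ (Fin n))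
    (hf : ∀ x, HasGradientAt f (f' x) x)
    (hfconv : ConvexOn ℝ Set.univ f)
    (L : ℝ) (hL : 0 ≤ L)
    (hlip : ∀ x y, ‖f' x - f' y‖ ≤ L * ‖x - y‖)
    (g : EuclideanSpace ℝ (Fin n) → EReal)
    -- `g` is proper:
    (hg_ne_top : ∃ x, g x ≠ ⊤) (hg_ne_bot : ∀ x, g x ≠ ⊥)
    -- `g` is closed:
    (hg_lsc : LowerSemicontinuous g)
    -- `g` is convex:
    (hg_conv : ∀ x y, ∀ a b : ℝ, 0 ≤ a → 0 ≤ b → a + b = 1 →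
      g (a • x + b • y) ≤ (a : EReal) * g x + (b : EReal) * g y)
    (Ls : ℝ) (hLs : L ≤ Ls)
    (y xplus : EuclideanSpace ℝ (Fin n))
    -- `x⁺` minimizes the quadratic model
    (hxplus : ∀ x,
      ((f y + ⟪f' y, xplus - y⟫ + Ls / 2 * ‖xplus - y‖ ^ 2 : ℝ) : EReal) + g xplus ≤
        ((f y + ⟪f' y, x - y⟫ + Ls / 2 * ‖x - y‖ ^ 2 : ℝ) : EReal) + g x)
    (z : EuclideanSpace ℝ (Fin n)) :
    ((f xplus : EReal) + g xplus) +
        ((Ls / 2 * ‖xplus - y‖ ^ 2 + Ls * ⟪y - z, xplus - y⟫ : ℝ) : EReal) ≤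
      (f z : EReal) + g z := by
  have hLs0 : 0 ≤ Ls := le_trans hL hLs
  obtain ⟨x₀, hx₀⟩ := hg_ne_top
  -- g xplus is finite
  have hxtop : g xplus ≠ ⊤ := by
    intro h
    have h1 := hxplus x₀
    rw [h, EReal.coe_add_top, top_le_iff] at h1
    have h2 : ((f y + ⟪f' y, x₀ - y⟫ + Ls / 2 * ‖x₀ - y‖ ^ 2 : ℝ) : EReal) + g x₀ < ⊤ :=
      EReal.add_lt_top (EReal.coe_ne_top _) hx₀
    exact absurd h1 h2.ne
  set b : ℝ := (g xplus).toReal with hbdef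
  have hb : (b : EReal) = g xplus := EReal.coe_toReal hxtop (hg_ne_bot _)
  rcases eq_or_ne (g z) ⊤ with hz | hz
  · rw [hz, EReal.coe_add_top]; exact le_top
  set c : ℝ := (g z).toReal with hcdef
  have hc : (c : EReal) = g z := EReal.coe_toReal hz (hg_ne_bot _)
  set Q : EuclideanSpace ℝ (Fin n) → ℝ :=
    fun x => f y + ⟪f' y, x - y⟫ + Ls / 2 * ‖x - y‖ ^ 2 with hQ
  -- step: for all t ∈ (0,1)
  have hstep : ∀ t ∈ Set.Ioo (0:ℝ) 1,
      Q xplus + b + Ls / 2 * (1 - t) * ‖z - xplus‖ ^ 2 ≤ Q z + c := by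
    intro t ht
    set w := xplus + t • (z - xplus) with hw
    have hwconv : w = (1 - t) • xplus + t • z := by
      rw [hw]; simp [smul_sub, sub_smul]; abel
    have hgw : g w ≤ (((1 - t) * b + t * c : ℝ) : EReal) := by
      have := hg_conv xplus z (1 - t) t (by linarith [ht.2]) ht.1.le (by ring)
      rw [← hwconv] at this
      rw [EReal.coe_add, EReal.coe_mul, EReal.coe_mul, hb, hc]
      exact this
    have hmin := hxplus w
    have hcomb : ((Q xplus + b : ℝ) : EReal) ≤ ((Q w + ((1 - t) * b + t * c) : ℝ) : EReal) := by
      rw [EReal.coe_add, EReal.coe_add, hb]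
      calc ((Q xplus : ℝ) : EReal) + g xplus ≤ ((Q w : ℝ) : EReal) + g w := hmin
        _ ≤ ((Q w : ℝ) : EReal) + (((1 - t) * b + t * c : ℝ) : EReal) :=
            add_le_add le_rfl hgw
    rw [EReal.coe_le_coe_iff] at hcomb
    -- quadratic identity for Q w
    have hwy : w - y = (xplus - y) + t • ((z - y) - (xplus - y)) := by
      rw [hw]
      have : z - xplus = (z - y) - (xplus - y) := by abel
      rw [this]; abel
    have hzx : z - xplus = (z - y) - (xplus - y) := by abel
    have hQw : Q w = (1 - t) * Q xplus + t * Q z - Ls / 2 * t * (1 - t) * ‖z - xplus‖ ^ 2 := by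
      rw [hQ]
      simp only [hwy, hzx]
      rw [quad_id]
      simp only [inner_add_right, inner_sub_right, real_inner_smul_right]
      ring
    rw [hQw] at hcomb
    nlinarith [ht.1, hcomb]
  -- take t → 0
  have hkey : Q xplus + b + Ls / 2 * ‖z - xplus‖ ^ 2 ≤ Q z + c := by
    have htend : Filter.Tendsto
        (fun t : ℝ => Q xplus + b + Ls / 2 * (1 - t) * ‖z - xplus‖ ^ 2)
        (nhdsWithin 0 (Set.Ioi 0)) (nhds (Q xplus + b + Ls / 2 * ‖z - xplus‖ ^ 2)) := by
      have hcont : Filter.Tendsto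
          (fun t : ℝ => Q xplus + b + Ls / 2 * (1 - t) * ‖z - xplus‖ ^ 2)
          (nhds 0) (nhds (Q xplus + b + Ls / 2 * (1 - 0) * ‖z - xplus‖ ^ 2)) := by
        exact (continuous_const.add ((continuous_const.mul
          (continuous_const.sub continuous_id)).mul continuous_const)).tendsto 0
      simpa using hcont.mono_left nhdsWithin_le_nhds
    refine le_of_tendsto htend ?_
    filter_upwards [Ioo_mem_nhdsGT_of_mem (by norm_num : (0:ℝ) ∈ Set.Ico (0:ℝ) 1)] with t ht
    exact hstep t ht
  -- descent lemma and convexity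
  have hdes : f xplus ≤ Q xplus := by
    have h1 := descent_lemma f f' hf L hL hlip y xplus
    rw [hQ]
    nlinarith [sq_nonneg ‖xplus - y‖]
  have hlb : f y + ⟪f' y, z - y⟫ ≤ f z := grad_convex_lb f f' hf hfconv y z
  -- final assembly
  rw [← hb, ← hc, ← EReal.coe_add, ← EReal.coe_add, ← EReal.coe_add, EReal.coe_le_coe_iff]
  have hnorm : ‖z - xplus‖ ^ 2 =
      ‖z - y‖ ^ 2 - 2 * ⟪z - y, xplus - y⟫ + ‖xplus - y‖ ^ 2 := by
    have hzx : z - xplus = (z - y) - (xplus - y) := by abel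
    rw [hzx]
    simp only [← real_inner_self_eq_norm_sq, inner_sub_left, inner_sub_right]
    linarith [real_inner_comm z y, real_inner_comm xplus z, real_inner_comm xplus y]
  have hinner : ⟪y - z, xplus - y⟫ = -⟪z - y, xplus - y⟫ := by
    have : y - z = -(z - y) := by abel
    rw [this, inner_neg_left]
  rw [hnorm] at hkey
  rw [hinner]
  simp only [hQ] at hkey hdes
  nlinarith [hkey, hdes, hlb]
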